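/- The generating function S(x,t) = −e^{xt}/(1+t²) satisfies ∂²S/∂x² + S = −e^{xt} for all real x and t, and equals Σ_{n=0}^{∞} (sₙ(x)/n!) tⁿ for |t| < 1, where sₙ is the unique polynomial solution of sₙ'' + sₙ = −xⁿ. -/

import Mathlib

noncomputable def S (x t : ℝ) : ℝ := -Real.exp (x * t) / (1 + t ^ 2)

open Polynomial

lemma homog_zero (q : ℝ[X]) (h : derivative (derivative q) + q = 0) : q = 0 := by
  by_contra hq
  by_cases h0 : q.natDegree = 0
  · have hD : derivative q = 0 := by
      rw [Polynomial.eq_C_of_natDegree_eq_zero h0]; simp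
    rw [hD, derivative_zero, zero_add] at h
    exact hq h
  · have h1 : (derivative (derivative q)).natDegree < q.natDegree :=
      lt_of_le_of_lt ((natDegree_derivative_le _).trans (Nat.sub_le _ _))
        (natDegree_derivative_lt h0)
    have := congrArg (fun p : ℝ[X] => p.coeff q.natDegree) h
    simp only [coeff_add, coeff_zero,
      coeff_eq_zero_of_natDegree_lt h1, zero_add] at this
    exact hq (leadingCoeff_eq_zero.1 this)

noncomputable def pp : ℕ → ℝ[X]
  | 0 => -1
  | 1 => -X
  | (n+2) => -(X^(n+2)) - C (((n+2 : ℕ) : ℝ) * ((n+1 : ℕ) : ℝ)) * pp n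

lemma hpp : ∀ n, derivative (derivative (pp n)) + pp n = -(X ^ n) := by
  intro n
  induction n using Nat.strong_induction_on with
  | _ n ih =>
    match n with
    | 0 => simp [pp]
    | 1 => simp [pp]
    | (n+2) =>
      have h := ih n (by omega)
      have hD : derivative (pp (n+2)) =
          -(C ((n+2 : ℕ) : ℝ) * X^(n+1)) -
            C (((n+2 : ℕ) : ℝ) * ((n+1 : ℕ) : ℝ)) * derivative (pp n) := by
        simp [pp, derivative_X_pow]
        rw [map_ofNat C 2]; ring
      have hD2 : derivative (derivative (pp (n+2))) =
          -(C ((n+2 : ℕ) : ℝ) * (C ((n+1 : ℕ) : ℝ) * X^n)) -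
            C (((n+2 : ℕ) : ℝ) * ((n+1 : ℕ) : ℝ)) *
              derivative (derivative (pp n)) := by
        rw [hD]; simp [derivative_X_pow]
      rw [hD2]
      show _ = -(X ^ (n+2))
      rw [show pp (n+2) = -(X^(n+2)) - C (((n+2 : ℕ) : ℝ) * ((n+1 : ℕ) : ℝ)) * pp n from rfl]
      have hc : C (((n+2 : ℕ) : ℝ) * ((n+1 : ℕ) : ℝ)) =
          C ((n+2 : ℕ) : ℝ) * C ((n+1 : ℕ) : ℝ) := by rw [C_mul]
      linear_combination (-(C (((n+2 : ℕ) : ℝ) * ((n+1 : ℕ) : ℝ)))) * h +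
        (X ^ n : ℝ[X]) * hc

noncomputable def aa (x : ℝ) (n : ℕ) : ℝ := (pp n).eval x / n.factorial

lemma aa_zero (x : ℝ) : aa x 0 = -1 := by simp [aa, pp]

lemma aa_one (x : ℝ) : aa x 1 = -x := by simp [aa, pp]

lemma aa_rec (x : ℝ) (n : ℕ) :
    aa x (n+2) = -(x^(n+2) / ((n+2).factorial : ℝ)) - aa x n := by
  have hfac : (((n+2).factorial : ℕ) : ℝ) =
      ((n+2 : ℕ) : ℝ) * ((n+1 : ℕ) : ℝ) * (n.factorial : ℝ) := by
    rw [Nat.factorial_succ, Nat.factorial_succ]; push_cast; ring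
  have h0 : (n.factorial : ℝ) ≠ 0 := Nat.cast_ne_zero.2 (Nat.factorial_ne_zero n)
  have h1 : ((n+2 : ℕ) : ℝ) ≠ 0 := by positivity
  have h2 : ((n+1 : ℕ) : ℝ) ≠ 0 := by positivity
  simp only [aa, pp, eval_sub, eval_neg, eval_pow, eval_X, eval_mul, eval_C, hfac]
  field_simp

lemma aa_bound' (x : ℝ) : ∀ n, |aa x n| ≤ ∑ k ∈ Finset.range (n+1), |x|^k / k.factorial := by
  intro n
  induction n using Nat.strong_induction_on with
  | _ n ih =>
    match n with
    | 0 => simp [aa_zero]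
    | 1 =>
      rw [aa_one]
      simp only [abs_neg]
      rw [Finset.sum_range_succ, Finset.sum_range_one]
      simp
    | (n+2) =>
      have h := ih n (by omega)
      rw [aa_rec]
      calc |-(x^(n+2) / ((n+2).factorial : ℝ)) - aa x n|
          ≤ |x^(n+2) / ((n+2).factorial : ℝ)| + |aa x n| := by
            have e : -(x ^ (n + 2) / ((n+2).factorial : ℝ)) - aa x n =
                -((x ^ (n + 2) / ((n+2).factorial : ℝ)) + aa x n) := by ring
            rw [e, abs_neg]
            exact abs_add_le _ _
        _ ≤ |x|^(n+2) / ((n+2).factorial : ℝ) + ∑ k ∈ Finset.range (n+1), |x|^k / k.factorial := by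
            gcongr
            rw [abs_div, abs_pow]
            simp
        _ ≤ ∑ k ∈ Finset.range (n+3), |x|^k / k.factorial := by
            have e : ∑ k ∈ Finset.range (n+3), |x|^k / (k.factorial : ℝ) =
                (∑ k ∈ Finset.range (n+1), |x|^k / (k.factorial : ℝ)) +
                  |x|^(n+1) / ((n+1).factorial : ℝ) + |x|^(n+2) / ((n+2).factorial : ℝ) := by
              rw [Finset.sum_range_succ, Finset.sum_range_succ]
            rw [e]
            have : (0:ℝ) ≤ |x|^(n+1) / ((n+1).factorial : ℝ) := by positivity
            linarith
        _ = _ := rfl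

lemma aa_bound (x : ℝ) (n : ℕ) : |aa x n| ≤ Real.exp |x| := by
  refine (aa_bound' x n).trans ?_
  exact Real.sum_le_exp_of_nonneg (abs_nonneg x) (n+1)

open Polynomial in
theorem stmt15 :
    (∀ x t : ℝ, deriv (deriv (fun y => S y t)) x + S x t = -Real.exp (x * t)) ∧
    ∀ s : ℕ → ℝ[X], (∀ n, derivative (derivative (s n)) + s n = -(X ^ n)) →
      ∀ x t : ℝ, |t| < 1 →
        S x t = ∑' n : ℕ, (s n).eval x / (n.factorial : ℝ) * t ^ n := by
  constructor
  · intro x t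
    have h1t : (1 : ℝ) + t^2 ≠ 0 := by positivity
    have hS1 : deriv (fun y => S y t) = fun y => -(t * Real.exp (y * t)) / (1 + t^2) := by
      funext y
      have h1 : HasDerivAt (fun y : ℝ => y * t) t y := by
        simpa using (hasDerivAt_id y).mul_const t
      have h2 : HasDerivAt (fun y : ℝ => Real.exp (y * t)) (Real.exp (y * t) * t) y :=
        h1.exp
      have h3 := (h2.neg).div_const (1 + t^2)
      have h4 : HasDerivAt (fun y : ℝ => S y t) (-(t * Real.exp (y * t)) / (1 + t^2)) y := by
        rw [show -(t * Real.exp (y * t)) = -(Real.exp (y * t) * t) by ring]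
        exact h3
      exact h4.deriv
    rw [hS1]
    have h1 : HasDerivAt (fun y : ℝ => y * t) t x := by
      simpa using (hasDerivAt_id x).mul_const t
    have h2 : HasDerivAt (fun y : ℝ => Real.exp (y * t)) (Real.exp (x * t) * t) x :=
      h1.exp
    have h3 : HasDerivAt (fun y : ℝ => -(t * Real.exp (y * t)) / (1 + t^2))
        (-(t * (Real.exp (x * t) * t)) / (1 + t^2)) x := by
      have := ((h2.const_mul t).neg).div_const (1 + t^2)
      exact this
    rw [h3.deriv]
    show -(t * (Real.exp (x * t) * t)) / (1 + t ^ 2) + -Real.exp (x * t) / (1 + t ^ 2) = _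
    field_simp
    ring
  · intro s hs x t ht
    have hsp : ∀ n, s n = pp n := by
      intro n
      have h0 : derivative (derivative (s n - pp n)) + (s n - pp n) = 0 := by
        have h1 := hs n
        have h2 := hpp n
        simp only [derivative_sub]
        linear_combination h1 - h2
      have := homog_zero _ h0
      exact sub_eq_zero.1 this
    have h1t : (1 : ℝ) + t^2 ≠ 0 := by positivity
    set f : ℕ → ℝ := fun n => aa x n * t ^ n with hf_def
    have htarget : (fun n : ℕ => (s n).eval x / (n.factorial : ℝ) * t ^ n) = f := by
      funext n; simp [hf_def, aa, hsp n]
    rw [htarget]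
    have hgeo : Summable (fun n : ℕ => Real.exp |x| * |t| ^ n) :=
      (summable_geometric_of_lt_one (abs_nonneg t) ht).mul_left _
    have hf : Summable f := by
      refine Summable.of_norm_bounded hgeo ?_
      intro n
      rw [hf_def]
      simp only [norm_mul, norm_pow, Real.norm_eq_abs]
      exact mul_le_mul_of_nonneg_right (aa_bound x n) (pow_nonneg (abs_nonneg t) n)
    set E : ℕ → ℝ := fun n => -((x * t) ^ n / (n.factorial : ℝ)) with hE_def
    have hE : Summable E := (Real.summable_pow_div_factorial (x * t)).neg
    have hexp : -Real.exp (x * t) = ∑' n : ℕ, E n := by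
      rw [Real.exp_eq_exp_ℝ, NormedSpace.exp_eq_tsum_div, ← tsum_neg]
    have hshift : ∀ n, E (n + 2) = f (n + 2) + t ^ 2 * f n := by
      intro n
      simp only [hE_def, hf_def, aa_rec, mul_pow]
      ring
    have hf2 : Summable (fun n => f (n + 2)) := (summable_nat_add_iff 2).2 hf
    have hE2 : Summable (fun n => E (n + 2)) := (summable_nat_add_iff 2).2 hE
    have hsumE : ∑' n, E n = E 0 + E 1 + ∑' n, E (n + 2) := by
      rw [hE.tsum_eq_zero_add, ((summable_nat_add_iff 1).2 hE).tsum_eq_zero_add, ← add_assoc]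
    have hsumf : ∑' n, f n = f 0 + f 1 + ∑' n, f (n + 2) := by
      rw [hf.tsum_eq_zero_add, ((summable_nat_add_iff 1).2 hf).tsum_eq_zero_add, ← add_assoc]
    have hE01 : E 0 = f 0 ∧ E 1 = f 1 := by
      constructor <;> simp [hE_def, hf_def, aa_zero, aa_one]
    have hsplit : ∑' n, E (n + 2) = (∑' n, f (n + 2)) + t ^ 2 * ∑' n, f n := by
      calc ∑' n, E (n + 2) = ∑' n, (f (n + 2) + t ^ 2 * f n) := by
            exact tsum_congr hshift
        _ = (∑' n, f (n + 2)) + ∑' n, t ^ 2 * f n :=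
            hf2.tsum_add (hf.mul_left _)
        _ = (∑' n, f (n + 2)) + t ^ 2 * ∑' n, f n := by rw [tsum_mul_left]
    have key : -Real.exp (x * t) = (1 + t ^ 2) * ∑' n, f n := by
      rw [hexp, hsumE, hsplit, hE01.1, hE01.2]
      rw [hsumf]
      ring
    have : S x t = ((1 + t ^ 2) * ∑' n, f n) / (1 + t ^ 2) := by
      rw [← key]; rfl
    rw [this, mul_div_cancel_left₀ _ h1t]
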